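/- Let X be a random variable with values in a measurable space 𝒳, φ : 𝒳 → ℝ^d measurable with E[‖φ(X)‖] < ∞, and suppose there exists c ∈ ℝ^d such that cᵀφ(X) is almost surely equal to a nonzero constant. Then there exist n ≤ d points x₁,…,xₙ ∈ 𝒳 with φ(xᵢ) in the support of the law of φ(X), and positive weights w₁,…,wₙ summing appropriately, such that E[φ(X)] = Σᵢ wᵢ φ(xᵢ). -/

import Mathlib

open MeasureTheory

/-- The support of a measure on `ℝ^d`: the set of points all of whose open
neighborhoods have positive measure. -/
def measSupport {d : ℕ} (μ : Measure (Fin d → ℝ)) : Set (Fin d → ℝ) :=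
  {y | ∀ U : Set (Fin d → ℝ), IsOpen U → y ∈ U → μ U ≠ 0}


open Set Module

lemma measSupport_compl_eq {d : ℕ} (μ : Measure (Fin d → ℝ)) :
    (measSupport μ)ᶜ = ⋃₀ {U | IsOpen U ∧ μ U = 0} := by
  ext y
  constructor
  · intro hy
    simp only [measSupport, mem_compl_iff, mem_setOf_eq, not_forall] at hy
    obtain ⟨U, hUo, hyU, hU⟩ := hy
    exact ⟨U, ⟨hUo, not_not.mp hU⟩, hyU⟩
  · rintro ⟨U, ⟨hUo, hU0⟩, hyU⟩
    intro hy
    exact hy U hUo hyU hU0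

lemma measSupport_isClosed {d : ℕ} (μ : Measure (Fin d → ℝ)) : IsClosed (measSupport μ) := by
  rw [← isOpen_compl_iff, measSupport_compl_eq]
  exact isOpen_sUnion fun U hU => hU.1

lemma measSupport_compl_null {d : ℕ} (μ : Measure (Fin d → ℝ)) : μ (measSupport μ)ᶜ = 0 := by
  obtain ⟨B, hBc, -, hB⟩ := TopologicalSpace.exists_countable_basis (Fin d → ℝ)
  have hsub : (measSupport μ)ᶜ ⊆ ⋃₀ {U ∈ B | μ U = 0} := by
    intro y hy
    rw [measSupport_compl_eq] at hy
    obtain ⟨U, ⟨hUo, hU0⟩, hyU⟩ := hy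
    obtain ⟨V, hVB, hyV, hVU⟩ := hB.exists_subset_of_mem_open hyU hUo
    exact ⟨V, ⟨hVB, le_antisymm (hU0 ▸ measure_mono hVU) zero_le⟩, hyV⟩
  refine measure_mono_null hsub ?_
  rw [measure_sUnion_null_iff (hBc.mono (sep_subset _ _))]
  exact fun s hs => hs.2

lemma measSupport_ae {d : ℕ} (μ : Measure (Fin d → ℝ)) : ∀ᵐ y ∂μ, y ∈ measSupport μ := by
  rw [ae_iff]
  exact measSupport_compl_null μ

lemma inter_measure_ne_zero {d : ℕ} (μ : Measure (Fin d → ℝ)) {T : Set (Fin d → ℝ)}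
    (hT : μ T ≠ 0) : μ (T ∩ measSupport μ) ≠ 0 := by
  intro h0
  apply hT
  have hle : μ T ≤ μ (T ∩ measSupport μ) + μ (measSupport μ)ᶜ := by
    refine le_trans (measure_mono ?_) (measure_union_le _ _)
    intro y hy
    by_cases h : y ∈ measSupport μ
    · exact Or.inl ⟨hy, h⟩
    · exact Or.inr h
  rw [h0, measSupport_compl_null, add_zero] at hle
  exact le_antisymm hle zero_le

lemma measSupport_subset_closure_inter {d : ℕ} (μ : Measure (Fin d → ℝ))
    {R : Set (Fin d → ℝ)} (hR : ∀ T, MeasurableSet T → μ T ≠ 0 → (T ∩ R).Nonempty) :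
    measSupport μ ⊆ closure (measSupport μ ∩ R) := by
  intro y hy
  rw [mem_closure_iff]
  intro U hUo hyU
  have h2 : μ (U ∩ measSupport μ) ≠ 0 := inter_measure_ne_zero μ (hy U hUo hyU)
  obtain ⟨r, ⟨hrU, hrS⟩, hrR⟩ :=
    hR _ (hUo.measurableSet.inter (measSupport_isClosed μ).measurableSet) h2
  exact ⟨r, hrU, hrS, hrR⟩

lemma mem_closure_interior_of_convex {E : Type*} [NormedAddCommGroup E] [NormedSpace ℝ E]
    {K : Set E} (hK : Convex ℝ K) {x₀ x : E} (h₀ : x₀ ∈ interior K) (hx : x ∈ closure K) :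
    x ∈ closure (interior K) := by
  have h0 : Filter.Tendsto (fun n : ℕ => ((n : ℝ) + 1)⁻¹) Filter.atTop (nhds 0) :=
    tendsto_one_div_add_atTop_nhds_zero_nat.congr (by intro n; rw [one_div])
  have hseq : Filter.Tendsto (fun n : ℕ => ((n : ℝ) + 1)⁻¹ • x₀ + (1 - ((n : ℝ) + 1)⁻¹) • x)
      Filter.atTop (nhds x) := by
    have h1 : Filter.Tendsto (fun n : ℕ => (1 - ((n : ℝ) + 1)⁻¹)) Filter.atTop (nhds (1 - 0)) :=
      (tendsto_const_nhds (x := (1:ℝ))).sub h0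
    have := (h0.smul_const x₀).add (h1.smul_const x)
    simpa using this
  refine mem_closure_of_tendsto hseq (Filter.Eventually.of_forall fun n => ?_)
  have hpos : (0 : ℝ) < ((n : ℝ) + 1)⁻¹ := by positivity
  have hle : ((n : ℝ) + 1)⁻¹ ≤ 1 := by
    rw [inv_le_one_iff₀]
    right
    linarith [Nat.cast_nonneg (α := ℝ) n]
  exact hK.combo_interior_closure_mem_interior h₀ hx hpos (by linarith) (by ring)

open Module

lemma bary_mem (k : ℕ) (μ : Measure (Fin k → ℝ)) (hprob : IsProbabilityMeasure μ)
    (hi : Integrable id μ) (R : Set (Fin k → ℝ))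
    (hR : ∀ T, MeasurableSet T → μ T ≠ 0 → (T ∩ R).Nonempty) :
    (∫ y, y ∂μ) ∈ convexHull ℝ (measSupport μ ∩ R) := by
  induction k using Nat.strong_induction_on with
  | _ k IH =>
  haveI := hprob
  set S := measSupport μ with hSdef
  set b := ∫ y, y ∂μ with hbdef
  have hid : Integrable (fun y : Fin k → ℝ => y) μ := hi
  have hae : ∀ᵐ y ∂μ, y ∈ S := measSupport_ae μ
  have hdense : S ⊆ closure (S ∩ R) := measSupport_subset_closure_inter μ hR
  by_cases hTop : affineSpan ℝ (S ∩ R) = ⊤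
  · -- full-dimensional case
    set K := convexHull ℝ (S ∩ R) with hKdef
    have hKconv : Convex ℝ K := convex_convexHull ℝ _
    have hint : (interior K).Nonempty :=
      interior_convexHull_nonempty_iff_affineSpan_eq_top.mpr hTop
    by_contra hb
    obtain ⟨f, hf⟩ := geometric_hahn_banach_open_point hKconv.interior isOpen_interior
      (fun h => hb (interior_subset h))
    obtain ⟨a₀, ha₀⟩ := hint
    have hSsub : S ⊆ closure (interior K) := by
      intro y hy
      have h2 : y ∈ closure K := closure_mono (subset_convexHull ℝ _) (hdense hy)
      exact mem_closure_interior_of_convex hKconv ha₀ h2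
    have hle : ∀ y ∈ S, f y ≤ f b := by
      intro y hy
      have hcl : IsClosed {a : Fin k → ℝ | f a ≤ f b} := isClosed_le f.continuous continuous_const
      exact hcl.closure_subset ((closure_mono (fun a ha => (hf a ha).le)) (hSsub hy))
    have hfi : Integrable (fun y => f y) μ := f.integrable_comp hid
    have hgi : Integrable (fun y => f b - f y) μ := (integrable_const _).sub hfi
    have hg0 : 0 ≤ᵐ[μ] fun y => f b - f y := hae.mono fun y hy => sub_nonneg.2 (hle y hy)
    have hintf : ∫ y, f y ∂μ = f b := f.integral_comp_comm hid
    have hgint : ∫ y, (f b - f y) ∂μ = 0 := by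
      rw [integral_sub (integrable_const _) hfi, integral_const, probReal_univ,
        one_smul, hintf, sub_self]
    have hgz : (fun y => f b - f y) =ᵐ[μ] 0 :=
      (integral_eq_zero_iff_of_nonneg_ae hg0 hgi).mp hgint
    have hU0 : μ {y | f y ≠ f b} = 0 := by
      rw [Filter.EventuallyEq, ae_iff] at hgz
      refine measure_mono_null ?_ hgz
      intro y hy
      simp only [mem_setOf_eq, Pi.zero_apply] at hy ⊢
      intro h
      exact hy (by linarith)
    have hUo : IsOpen {y : Fin k → ℝ | f y ≠ f b} := by
      have : IsClosed {y : Fin k → ℝ | f y = f b} := isClosed_eq f.continuous continuous_const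
      have h2 := this.isOpen_compl
      convert h2 using 1
      ext; simp
    have hSeq : ∀ y ∈ S, f y = f b := by
      intro y hy
      by_contra hne
      exact hy _ hUo hne hU0
    have hKsub : K ⊆ {y : Fin k → ℝ | f y = f b} := by
      refine convexHull_min (fun y hy => hSeq y hy.1) ?_
      exact convex_hyperplane ⟨f.map_add, f.map_smul⟩ (f b)
    exact absurd (hKsub (interior_subset ha₀)) (ne_of_lt (hf a₀ ha₀))
  · -- lower-dimensional case
    have hSclosed := measSupport_isClosed μ
    have hμS : μ S ≠ 0 := by
      intro h0
      have h1 : μ Set.univ ≤ μ S + μ Sᶜ := by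
        rw [← Set.union_compl_self S]
        exact measure_union_le _ _
      rw [h0, measSupport_compl_null, add_zero, measure_univ] at h1
      exact one_ne_zero (le_antisymm h1 zero_le)
    obtain ⟨p, hpS, hpR⟩ := hR S hSclosed.measurableSet hμS
    set A₀ := affineSpan ℝ (S ∩ R) with hA₀def
    have hpA : p ∈ A₀ := subset_affineSpan ℝ _ ⟨hpS, hpR⟩
    have hA₀closed : IsClosed (A₀ : Set (Fin k → ℝ)) := A₀.closed_of_finiteDimensional
    have hSA : S ⊆ (A₀ : Set (Fin k → ℝ)) := by
      intro y hy
      have h1 := hdense hy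
      have h2 : closure (S ∩ R) ⊆ closure (A₀ : Set (Fin k → ℝ)) :=
        closure_mono (subset_affineSpan ℝ _)
      rw [hA₀closed.closure_eq] at h2
      exact h2 h1
    have hbA : b ∈ (A₀ : Set (Fin k → ℝ)) :=
      A₀.convex.integral_mem hA₀closed (hae.mono fun y hy => hSA hy) hid
    have hVne : A₀.direction ≠ ⊤ := by
      intro h
      exact hTop ((AffineSubspace.direction_eq_top_iff_of_nonempty ⟨p, hpA⟩).mp h)
    set m := finrank ℝ A₀.direction with hmdef
    have hmk : m < k := by
      have h1 : m < finrank ℝ (Fin k → ℝ) := Submodule.finrank_lt hVne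
      rwa [Module.finrank_fin_fun] at h1
    obtain ⟨W, hW⟩ := Submodule.exists_isCompl A₀.direction
    set π := A₀.direction.linearProjOfIsCompl W hW with hπdef
    set e := (Module.finBasis ℝ A₀.direction).equivFun with hedef
    set L : (Fin k → ℝ) →L[ℝ] (Fin m → ℝ) :=
      LinearMap.toContinuousLinearMap (e.toLinearMap.comp π) with hLdef
    set M : (Fin m → ℝ) →L[ℝ] (Fin k → ℝ) :=
      LinearMap.toContinuousLinearMap (A₀.direction.subtype.comp e.symm.toLinearMap) with hMdef
    set Φ : (Fin k → ℝ) → (Fin m → ℝ) := fun y => L (y - p) with hΦdef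
    have hΦc : Continuous Φ := L.continuous.comp (continuous_id.sub continuous_const)
    have hΦm : Measurable Φ := hΦc.measurable
    have key : ∀ y ∈ (A₀ : Set (Fin k → ℝ)), p + M (Φ y) = y := by
      intro y hy
      have hv : y - p ∈ A₀.direction := by
        have := AffineSubspace.vsub_mem_direction hy hpA
        simpa using this
      have hπ1 : π (y - p) = ⟨y - p, hv⟩ :=
        Submodule.linearProjOfIsCompl_apply_left hW ⟨y - p, hv⟩
      show p + M (L (y - p)) = y
      rw [hLdef, hMdef]
      simp only [LinearMap.coe_toContinuousLinearMap', LinearMap.comp_apply, hπ1]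
      simp
    set ν := μ.map Φ with hνdef
    haveI hνprob : IsProbabilityMeasure ν := Measure.isProbabilityMeasure_map hΦm.aemeasurable
    have hi' : Integrable (fun y : Fin k → ℝ => y - p) μ := hid.sub (integrable_const p)
    have hΦint : Integrable Φ μ := L.integrable_comp hi'
    have hν_int : Integrable id ν := by
      rw [hνdef, integrable_map_measure aestronglyMeasurable_id hΦm.aemeasurable]
      exact hΦint
    have hbary : ∫ w, w ∂ν = Φ b := by
      rw [hνdef]
      show ∫ w, id w ∂(μ.map Φ) = Φ b
      rw [integral_map hΦm.aemeasurable aestronglyMeasurable_id]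
      show ∫ y, L (y - p) ∂μ = L (b - p)
      rw [L.integral_comp_comm hi', integral_sub hid (integrable_const p), integral_const,
        probReal_univ, one_smul]
    set R' := Φ '' (S ∩ R) with hR'def
    have hR' : ∀ T, MeasurableSet T → ν T ≠ 0 → (T ∩ R').Nonempty := by
      intro T hT hνT
      rw [hνdef, Measure.map_apply hΦm hT] at hνT
      have h2 : μ (Φ ⁻¹' T ∩ S) ≠ 0 := inter_measure_ne_zero μ hνT
      obtain ⟨r, ⟨hr1, hr2⟩, hr3⟩ := hR _ ((hΦm hT).inter hSclosed.measurableSet) h2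
      exact ⟨Φ r, hr1, ⟨r, ⟨hr2, hr3⟩, rfl⟩⟩
    have IHres := IH m hmk ν hνprob hν_int R' hR'
    set Ψ : (Fin m → ℝ) →ᵃ[ℝ] (Fin k → ℝ) :=
      (AffineEquiv.constVAdd ℝ (Fin k → ℝ) p).toAffineMap.comp M.toLinearMap.toAffineMap
      with hΨdef
    have hΨ : ∀ w, Ψ w = p + M w := by
      intro w
      simp [hΨdef, AffineEquiv.constVAdd, vadd_eq_add]
      rfl
    have himg : Ψ '' (measSupport ν ∩ R') ⊆ S ∩ R := by
      rintro _ ⟨w, ⟨hw1, ⟨r, hrSR, rfl⟩⟩, rfl⟩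
      have hr : Ψ (Φ r) = r := by rw [hΨ]; exact key r (subset_affineSpan ℝ _ hrSR)
      rw [hr]; exact hrSR
    have hΨb : Ψ (∫ w, w ∂ν) = b := by
      rw [hbary, hΨ]
      exact key b hbA
    have hmem : Ψ (∫ w, w ∂ν) ∈ convexHull ℝ (Ψ '' (measSupport ν ∩ R')) := by
      rw [← AffineMap.image_convexHull]
      exact Set.mem_image_of_mem _ IHres
    rw [← hΨb]
    exact convexHull_mono himg hmem


/-- Sharpened generalized Tchakaloff theorem: if moreover `cᵀφ(X)` is almost surely a
nonzero constant, then `n ≤ d` points suffice, and the weights sum to `1`. -/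
theorem generalized_tchakaloff_sharp {d : ℕ} {𝒳 : Type*} [MeasurableSpace 𝒳]
    {Ω : Type*} [MeasurableSpace Ω] (P : Measure Ω) [IsProbabilityMeasure P]
    (X : Ω → 𝒳) (hX : Measurable X)
    (φ : 𝒳 → Fin d → ℝ) (hφ : Measurable φ)
    (hint : Integrable (fun ω => φ (X ω)) P)
    (c : Fin d → ℝ) (z : ℝ) (hz : z ≠ 0)
    (hconst : ∀ᵐ ω ∂P, ∑ i, c i * φ (X ω) i = z) :
    ∃ (n : ℕ), n ≤ d ∧ ∃ (x : Fin n → 𝒳) (w : Fin n → ℝ),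
      (∀ i, φ (x i) ∈ measSupport (P.map (fun ω => φ (X ω)))) ∧
      (∀ i, 0 < w i) ∧
      (∑ i, w i = 1) ∧
      (∫ ω, φ (X ω) ∂P) = ∑ i, w i • φ (x i) := by
  classical
  set g : Ω → (Fin d → ℝ) := fun ω => φ (X ω) with hgdef
  have hgm : Measurable g := hφ.comp hX
  set μ := P.map g with hμdef
  haveI : IsProbabilityMeasure μ := Measure.isProbabilityMeasure_map hgm.aemeasurable
  have hi : Integrable id μ := by
    rw [hμdef, integrable_map_measure aestronglyMeasurable_id hgm.aemeasurable]
    exact hint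
  set R : Set (Fin d → ℝ) := Set.range g with hRdef
  have hR : ∀ T, MeasurableSet T → μ T ≠ 0 → (T ∩ R).Nonempty := by
    intro T hT h
    rw [hμdef, Measure.map_apply hgm hT] at h
    obtain ⟨ω, hω⟩ := nonempty_of_measure_ne_zero h
    exact ⟨g ω, hω, Set.mem_range_self ω⟩
  have hmain := bary_mem d μ inferInstance hi R hR
  have hb : ∫ y, y ∂μ = ∫ ω, φ (X ω) ∂P := by
    rw [hμdef]
    show ∫ y, id y ∂(P.map g) = ∫ ω, φ (X ω) ∂P
    rw [integral_map hgm.aemeasurable aestronglyMeasurable_id]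
    rfl
  haveI : (ae P).NeBot := ae_neBot.mpr (IsProbabilityMeasure.ne_zero P)
  obtain ⟨ω₀, hω₀⟩ := hconst.exists
  -- the linear functional
  set fc : (Fin d → ℝ) →ₗ[ℝ] ℝ :=
    { toFun := fun y => ∑ i, c i * y i
      map_add' := fun a b => by
        simp only [Pi.add_apply, mul_add]
        rw [Finset.sum_add_distrib]
      map_smul' := fun r a => by
        simp only [Pi.smul_apply, smul_eq_mul, RingHom.id_apply]
        rw [Finset.mul_sum]
        exact Finset.sum_congr rfl fun i _ => by ring } with hfcdef
  have hfcapp : ∀ y, fc y = ∑ i, c i * y i := fun y => rfl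
  have hfcne : fc ≠ 0 := by
    intro h0
    have h1 : fc (g ω₀) = z := hω₀
    rw [h0, LinearMap.zero_apply] at h1
    exact hz h1.symm
  have hfc_cont : Continuous fc := fc.continuous_of_finiteDimensional
  have hSplane : ∀ y ∈ measSupport μ, fc y = z := by
    intro y hy
    by_contra hne
    have hUo : IsOpen {u : Fin d → ℝ | fc u ≠ z} :=
      (isClosed_eq hfc_cont continuous_const).isOpen_compl
    have hμU : μ {u : Fin d → ℝ | fc u ≠ z} = 0 := by
      rw [hμdef, Measure.map_apply hgm (hUo.measurableSet)]
      have : {ω | ¬ fc (g ω) = z} = g ⁻¹' {u | fc u ≠ z} := rfl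
      rw [← this, ← ae_iff]
      exact hconst
    exact hy _ hUo hne hμU
  -- Caratheodory
  obtain ⟨ι, hfin, zf, w, hzR, haff, hwpos, hwsum, hrep⟩ :=
    eq_pos_convex_span_of_mem_convexHull hmain
  letI := hfin
  haveI : Nonempty ι := by
    by_contra h
    rw [not_nonempty_iff] at h
    haveI := h
    rw [Finset.univ_eq_empty, Finset.sum_empty] at hwsum
    exact zero_ne_one hwsum
  have hker_lt : finrank ℝ (LinearMap.ker fc) < d := by
    by_contra h
    push_neg at h
    have h1 : finrank ℝ (LinearMap.ker fc) ≤ finrank ℝ (Fin d → ℝ) := Submodule.finrank_le _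
    rw [Module.finrank_fin_fun] at h1
    have h2 : finrank ℝ (LinearMap.ker fc) = finrank ℝ (Fin d → ℝ) := by
      rw [Module.finrank_fin_fun]; omega
    have h3 : LinearMap.ker fc = ⊤ := Submodule.eq_top_of_finrank_eq h2
    exact hfcne (LinearMap.ker_eq_top.mp h3)
  have hvs : vectorSpan ℝ (Set.range zf) ≤ LinearMap.ker fc := by
    rw [vectorSpan_def, Submodule.span_le]
    rintro v ⟨y1, hy1, y2, hy2, rfl⟩
    have h1 : fc y1 = z := hSplane y1 (hzR hy1).1
    have h2 : fc y2 = z := hSplane y2 (hzR hy2).1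
    simp only [SetLike.mem_coe, LinearMap.mem_ker, vsub_eq_sub, map_sub, h1, h2, sub_self]
  have hcard : Fintype.card ι ≤ d := by
    have h1 := haff.finrank_vectorSpan_add_one
    have h2 : finrank ℝ (vectorSpan ℝ (Set.range zf)) ≤ finrank ℝ (LinearMap.ker fc) :=
      Submodule.finrank_mono hvs
    omega
  set n := Fintype.card ι with hndef
  set eqv : Fin n ≃ ι := (Fintype.equivFin ι).symm with heqv
  choose ω' hω' using fun i : ι => ((hzR (Set.mem_range_self i)).2 : zf i ∈ R)
  refine ⟨n, hcard, fun j => X (ω' (eqv j)), fun j => w (eqv j), ?_, ?_, ?_, ?_⟩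
  · intro j
    show g (ω' (eqv j)) ∈ measSupport μ
    rw [hω']
    exact (hzR (Set.mem_range_self _)).1
  · exact fun j => hwpos _
  · rw [Equiv.sum_comp eqv w]
    exact hwsum
  · rw [← hb, ← hrep]
    rw [← Equiv.sum_comp eqv (fun i => w i • zf i)]
    exact Finset.sum_congr rfl fun j _ => by rw [show φ (X (ω' (eqv j))) = g (ω' (eqv j)) from rfl, hω']
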